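/- Let a, b, c ≥ 0 be rationals and define in ℚ[[x]]: α = 2bx(1-ax)/(1-2cx+x²), β = ax/(1-ax), γ = 2abx²/(1-2cx+x²). Then γ = αβ, and (1-α)/(1-α-αβ) = 1 + 2abx²/(1 - 2(b+c)x + x²); consequently the coefficient of xⁿ equals 2ab·U_{n-2}(b+c) for n ≥ 2, where U_n are the Chebyshev polynomials of the second kind. -/

import Mathlib

open PowerSeries

theorem stmt15 (U : ℚ → ℕ → ℚ)
    (hU : ∀ (t : ℚ) (n : ℕ),
      U t n = coeff n ((1 - C (2 * t) * X + X ^ 2)⁻¹))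
    (a b c : ℚ) (ha : 0 ≤ a) (hb : 0 ≤ b) (hc : 0 ≤ c)
    (α β γ : PowerSeries ℚ)
    (hα : α = C (2 * b) * X * (1 - C a * X) * (1 - C (2 * c) * X + X ^ 2)⁻¹)
    (hβ : β = C a * X * (1 - C a * X)⁻¹)
    (hγ : γ = C (2 * a * b) * X ^ 2 * (1 - C (2 * c) * X + X ^ 2)⁻¹) :
    γ = α * β ∧
    (1 - α) * (1 - α - α * β)⁻¹ =
      1 + C (2 * a * b) * X ^ 2 * (1 - C (2 * (b + c)) * X + X ^ 2)⁻¹ ∧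
    ∀ n : ℕ, 2 ≤ n →
      coeff n ((1 - α) * (1 - α - α * β)⁻¹) = 2 * a * b * U (b + c) (n - 2) := by
  have hPu : (1 - C a * X) * (1 - C a * X)⁻¹ = 1 :=
    PowerSeries.mul_inv_cancel _ (by simp)
  have hQu : (1 - 2 * C c * X + X ^ 2) * (1 - 2 * C c * X + X ^ 2)⁻¹ = 1 :=
    PowerSeries.mul_inv_cancel _ (by simp)
  have hRu : (1 - 2 * (C b + C c) * X + X ^ 2) *
      (1 - 2 * (C b + C c) * X + X ^ 2)⁻¹ = 1 :=
    PowerSeries.mul_inv_cancel _ (by simp)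
  have h1 : γ = α * β := by
    rw [hγ, hα, hβ]
    simp only [map_mul, map_ofNat]
    linear_combination
      (-(2 * C a * C b * X ^ 2 * (1 - 2 * C c * X + X ^ 2)⁻¹)) * hPu
  have hcE : constantCoeff (1 - α - α * β) ≠ 0 := by
    simp [hα, hβ]
  have hEinv : (1 - α - α * β)⁻¹ =
      (1 - 2 * C c * X + X ^ 2) * (1 - 2 * (C b + C c) * X + X ^ 2)⁻¹ := by
    rw [PowerSeries.inv_eq_iff_mul_eq_one hcE, hα, hβ]
    simp only [map_mul, map_ofNat]
    linear_combination
      (-(2 * C b * X * (1 - C a * X) * (1 - 2 * (C b + C c) * X + X ^ 2)⁻¹)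
        - 2 * C a * C b * X ^ 2 * (1 - 2 * (C b + C c) * X + X ^ 2)⁻¹ *
          ((1 - C a * X) * (1 - C a * X)⁻¹)) * hQu
      + (-(2 * C a * C b * X ^ 2 * (1 - 2 * (C b + C c) * X + X ^ 2)⁻¹)) * hPu
      + hRu
  have h2 : (1 - α) * (1 - α - α * β)⁻¹ =
      1 + 2 * C a * C b * X ^ 2 * (1 - 2 * (C b + C c) * X + X ^ 2)⁻¹ := by
    rw [hEinv, hα]
    simp only [map_mul, map_ofNat]
    linear_combination
      (-(2 * C b * X * (1 - C a * X) *
          (1 - 2 * (C b + C c) * X + X ^ 2)⁻¹)) * hQu + hRu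
  refine ⟨h1, ?_, ?_⟩
  · simp only [map_mul, map_add, map_ofNat]
    linear_combination h2
  · intro n hn
    obtain ⟨m, rfl⟩ := Nat.exists_eq_add_of_le hn
    rw [h2, map_add, PowerSeries.coeff_one, if_neg (by omega)]
    have hre : 2 * C a * C b * X ^ 2 * (1 - 2 * (C b + C c) * X + X ^ 2)⁻¹ =
        X ^ 2 * (C (2 * a * b) * (1 - 2 * (C b + C c) * X + X ^ 2)⁻¹) := by
      simp only [map_mul, map_ofNat]; ring
    rw [hre, show 2 + m = m + 2 from Nat.add_comm 2 m, PowerSeries.coeff_X_pow_mul,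
      PowerSeries.coeff_C_mul, Nat.add_sub_cancel, hU]
    simp only [map_mul, map_add, map_ofNat]
    ring
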